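/- Fix (x₀,y₀) ∈ ℝ² and let V be the 4×4 real matrix with rows (1,0,0,0), (x₀²+y₀², 1, x₀, y₀), (2x₀, 0, 1, 0), (2y₀, 0, 0, 1). Then: (a) Vᵀ·Q_W·V = Q_W, i.e. V ∈ Aut(Q_W); and (b) for every nonzero b ∈ ℝ and every (x,y) ∈ ℝ², the ACC row vector of the translated circle satisfies w(b, x+x₀, y+y₀) = w(b, x, y)·V, where w(b,x,y) = (b(x²+y²) − 1/b, b, bx, by). Thus translation of the plane by (x₀,y₀) acts on augmented curvature-center coordinates by right multiplication by V. -/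
import Mathlib


open Matrix

/-- The matrix of the Wilker quadratic form. -/
noncomputable def QW : Matrix (Fin 4) (Fin 4) ℝ :=
  !![0, -4, 0, 0; -4, 0, 0, 0; 0, 0, 2, 0; 0, 0, 0, 2]

/-- The augmented curvature-center coordinate (ACC) row vector of an oriented
circle with nonzero signed curvature `b` and center `(x, y)`. -/
noncomputable def acc (b x y : ℝ) : Fin 4 → ℝ :=
  ![b * (x ^ 2 + y ^ 2) - 1 / b, b, b * x, b * y]

set_option maxHeartbeats 1000000 in
/-- Translation of the plane by `(x₀, y₀)` acts on augmented curvature-center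
coordinates by right multiplication by the matrix `V` below, which lies in
`Aut(Q_W)`. -/
theorem translation_acts_on_acc (x₀ y₀ : ℝ)
    (V : Matrix (Fin 4) (Fin 4) ℝ)
    (hV : V = !![1, 0, 0, 0;
                 x₀ ^ 2 + y₀ ^ 2, 1, x₀, y₀;
                 2 * x₀, 0, 1, 0;
                 2 * y₀, 0, 0, 1]) :
    Vᵀ * QW * V = QW ∧
    ∀ b x y : ℝ, b ≠ 0 →
      acc b (x + x₀) (y + y₀) = Matrix.vecMul (acc b x y) V := by
  subst hV
  constructor
  · have hVT : (!![1, 0, 0, 0;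
                 x₀ ^ 2 + y₀ ^ 2, 1, x₀, y₀;
                 2 * x₀, 0, 1, 0;
                 2 * y₀, 0, 0, 1] : Matrix (Fin 4) (Fin 4) ℝ)ᵀ =
        !![1, x₀ ^ 2 + y₀ ^ 2, 2 * x₀, 2 * y₀; 0, 1, 0, 0; 0, x₀, 1, 0; 0, y₀, 0, 1] := by
      ext i j; fin_cases i <;> fin_cases j <;> rfl
    rw [hVT, QW]
    ext i j
    fin_cases i <;> fin_cases j <;>
      simp [Matrix.mul_apply, Fin.sum_univ_four, Matrix.vecHead, Matrix.vecTail] <;> ring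
  · intro b x y hb
    funext i
    fin_cases i <;>
      simp [acc, Matrix.vecMul, dotProduct, Fin.sum_univ_four] <;>
      first
        | exact Or.inr rfl
        | ring
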